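/- If a sequence (a_F) indexed by finite subsets of a countable amenable group G is nonnegative, G-invariant (a_{Fg} = a_F), and strongly subadditive (a_{F₁∪F₂} ≤ a_{F₁} + a_{F₂} − a_{F₁∩F₂}, with a_∅ = 0), then for every Følner sequence (F_n), the limit of a_{F_n}/|F_n| exists and equals inf over finite nonempty F of a_F/|F|. -/

import Mathlib

open Filter Topology Pointwise

/-- `F` is `(K,ε)`-invariant: `|KF △ F| / |F| < ε`. -/
def KInvariant {G : Type*} [Group G] [DecidableEq G] (K F : Finset G) (ε : ℝ) : Prop :=
  (((K * F) \ F ∪ F \ (K * F)).card : ℝ) / F.card < ε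

/-- A Følner sequence of finite subsets of `G`. -/
def FolnerSeq {G : Type*} [Group G] [DecidableEq G] (Fo : ℕ → Finset G) : Prop :=
  (∀ n, (Fo n).Nonempty) ∧
  ∀ K : Finset G, ∀ ε > (0 : ℝ), ∀ᶠ n in atTop, KInvariant K (Fo n) ε


private lemma sum_if_eq {β R : Type*} [DecidableEq β] [NonAssocSemiring R]
    (s : Multiset β) (b : β) (c : R) :
    (s.map fun A => if A = b then c else 0).sum = (s.count b : ℕ) • c := by
  induction s using Multiset.induction with
  | empty => simp
  | cons x s ih =>
    by_cases h : x = b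
    · subst h
      simp only [Multiset.map_cons, Multiset.sum_cons, ih, if_pos rfl,
        Multiset.count_cons_self, succ_nsmul]
      exact add_comm _ _
    · simp [Multiset.map_cons, Multiset.sum_cons, ih, if_neg h,
        Multiset.count_cons_of_ne (Ne.symm h)]

private lemma sum_sq_le {G : Type*} [DecidableEq G] (E : Finset G)
    (𝒜 : Multiset (Finset G)) (h : ∀ A ∈ 𝒜, A ⊆ E) :
    (𝒜.map fun A => A.card ^ 2).sum ≤ Multiset.card 𝒜 * E.card ^ 2 := by
  induction 𝒜 using Multiset.induction with
  | empty => simp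
  | cons A s ih =>
    simp only [Multiset.map_cons, Multiset.sum_cons, Multiset.card_cons]
    have h1 : A.card ≤ E.card := Finset.card_le_card (h A (Multiset.mem_cons_self _ _))
    have h2 := ih fun B hB => h B (Multiset.mem_cons_of_mem hB)
    have h3 : A.card ^ 2 ≤ E.card ^ 2 := Nat.pow_le_pow_left h1 2
    calc A.card ^ 2 + (Multiset.map (fun A => A.card ^ 2) s).sum
        ≤ E.card ^ 2 + Multiset.card s * E.card ^ 2 := by omega
      _ = (Multiset.card s + 1) * E.card ^ 2 := by ring

/-- Shearer-type inequality for submodular functions: if a multiset of subsets of `E`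
covers every point of `E` exactly `k` times, then `k * a E ≤ ∑ a A`. -/
private lemma shearer {G : Type*} [DecidableEq G] (a : Finset G → ℝ) (h0 : a ∅ = 0)
    (hssub : ∀ F₁ F₂ : Finset G, a (F₁ ∪ F₂) ≤ a F₁ + a F₂ - a (F₁ ∩ F₂))
    (E : Finset G) (k : ℕ) (𝒜 : Multiset (Finset G))
    (hsub : ∀ A ∈ 𝒜, A ⊆ E)
    (hcov : ∀ x ∈ E, (𝒜.map fun A => if x ∈ A then (1 : ℕ) else 0).sum = k) :
    (k : ℝ) * a E ≤ (𝒜.map a).sum := by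
  suffices H : ∀ (m : ℕ) (𝒜 : Multiset (Finset G)),
      Multiset.card 𝒜 * E.card ^ 2 - (𝒜.map fun A => A.card ^ 2).sum = m →
      (∀ A ∈ 𝒜, A ⊆ E) →
      (∀ x ∈ E, (𝒜.map fun A => if x ∈ A then (1 : ℕ) else 0).sum = k) →
      (k : ℝ) * a E ≤ (𝒜.map a).sum by
    exact H _ 𝒜 rfl hsub hcov
  clear hsub hcov 𝒜
  intro m
  induction m using Nat.strong_induction_on with
  | _ m IH =>
    intro 𝒜 hm hsub hcov
    by_cases hcomp : ∀ A ∈ 𝒜, ∀ B ∈ 𝒜, A ⊆ B ∨ B ⊆ A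
    · -- chain case: every member is ∅ or E
      have hAE : ∀ A ∈ 𝒜, A = ∅ ∨ A = E := by
        intro A hA
        by_contra hcon
        push_neg at hcon
        obtain ⟨hAne, hAneE⟩ := hcon
        obtain ⟨x, hxA⟩ := hAne
        have hAE' : A ⊂ E := (hsub A hA).ssubset_of_ne hAneE
        obtain ⟨y, hyE, hyA⟩ := Finset.exists_of_ssubset hAE'
        have key : ∀ B ∈ 𝒜.erase A,
            (if y ∈ B then (1 : ℕ) else 0) ≤ (if x ∈ B then (1 : ℕ) else 0) := by
          intro B hB
          by_cases hy : y ∈ B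
          · have hB' : B ∈ 𝒜 := Multiset.mem_of_mem_erase hB
            have : A ⊆ B := by
              rcases hcomp A hA B hB' with h | h
              · exact h
              · exact absurd (h hy) hyA
            simp [hy, this hxA]
          · simp [hy]
        have hsplit : 𝒜 = A ::ₘ 𝒜.erase A := (Multiset.cons_erase hA).symm
        have hx' := hcov x (hAE'.subset hxA)
        have hy' := hcov y hyE
        rw [hsplit, Multiset.map_cons, Multiset.sum_cons] at hx' hy'
        rw [if_pos hxA] at hx'
        rw [if_neg hyA] at hy'
        have hle := Multiset.sum_map_le_sum_map
          (fun B => if y ∈ B then (1 : ℕ) else 0)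
          (fun B => if x ∈ B then (1 : ℕ) else 0) key
        omega
      rcases E.eq_empty_or_nonempty with hEe | ⟨x, hxE⟩
      · subst hEe
        have : (𝒜.map a) = 𝒜.map fun _ => (0 : ℝ) := by
          apply Multiset.map_congr rfl
          intro A hA
          rcases hAE A hA with h | h <;> simp [h, h0]
        rw [this, h0]
        simp
      · have hEne : E ≠ ∅ := Finset.nonempty_iff_ne_empty.mp ⟨x, hxE⟩
        have hcount : 𝒜.count E = k := by
          have := hcov x hxE
          have heq : (𝒜.map fun A => if x ∈ A then (1 : ℕ) else 0)
              = 𝒜.map fun A => if A = E then (1 : ℕ) else 0 := by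
            apply Multiset.map_congr rfl
            intro A hA
            rcases hAE A hA with h | h
            · subst h; simp [Ne.symm hEne]
            · subst h; simp [hxE]
          rw [heq, sum_if_eq] at this
          simpa using this
        have heqa : (𝒜.map a) = 𝒜.map fun A => if A = E then a E else 0 := by
          apply Multiset.map_congr rfl
          intro A hA
          rcases hAE A hA with h | h
          · subst h; simp [Ne.symm hEne, h0]
          · subst h; simp
        rw [heqa, sum_if_eq, hcount]
        simp [nsmul_eq_mul]
    · -- uncross
      push_neg at hcomp
      obtain ⟨A, hA, B, hB, hAB, hBA⟩ := hcomp
      have hne : A ≠ B := fun h => hAB (h ▸ subset_rfl)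
      have hBe : B ∈ 𝒜.erase A := (Multiset.mem_erase_of_ne hne.symm).mpr hB
      set rest := (𝒜.erase A).erase B with hrest
      have h1 : 𝒜 = A ::ₘ B ::ₘ rest := by
        rw [hrest, Multiset.cons_erase hBe, Multiset.cons_erase hA]
      set 𝒜' : Multiset (Finset G) := (A ∪ B) ::ₘ (A ∩ B) ::ₘ rest with h𝒜'
      have hrestsub : ∀ C ∈ rest, C ⊆ E := fun C hC =>
        hsub C (Multiset.mem_of_mem_erase (Multiset.mem_of_mem_erase hC))
      have hsub' : ∀ C ∈ 𝒜', C ⊆ E := by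
        intro C hC
        rw [h𝒜', Multiset.mem_cons, Multiset.mem_cons] at hC
        rcases hC with rfl | rfl | hC
        · exact Finset.union_subset (hsub A hA) (hsub B hB)
        · exact (Finset.inter_subset_left).trans (hsub A hA)
        · exact hrestsub C hC
      have hcov' : ∀ x ∈ E, (𝒜'.map fun A => if x ∈ A then (1 : ℕ) else 0).sum = k := by
        intro x hx
        have := hcov x hx
        rw [h1] at this
        rw [h𝒜']
        simp only [Multiset.map_cons, Multiset.sum_cons] at this ⊢
        by_cases hxa : x ∈ A <;> by_cases hxb : x ∈ B <;>
          simp [hxa, hxb, Finset.mem_union, Finset.mem_inter] at this ⊢ <;> omega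
      -- cardinalities
      have hAu : A ⊂ A ∪ B := Finset.ssubset_iff_subset_ne.mpr
        ⟨Finset.subset_union_left, fun h => hBA (h ▸ Finset.subset_union_right)⟩
      have hBu : B ⊂ A ∪ B := Finset.ssubset_iff_subset_ne.mpr
        ⟨Finset.subset_union_right, fun h => hAB (h ▸ Finset.subset_union_left)⟩
      have hcu : A.card < (A ∪ B).card := Finset.card_lt_card hAu
      have hcb : B.card < (A ∪ B).card := Finset.card_lt_card hBu
      have hsum : (A ∪ B).card + (A ∩ B).card = A.card + B.card :=
        Finset.card_union_add_card_inter A B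
      have hquad : A.card ^ 2 + B.card ^ 2 < (A ∪ B).card ^ 2 + (A ∩ B).card ^ 2 := by
        have h1' : (A.card : ℤ) ^ 2 + (B.card : ℤ) ^ 2
            < ((A ∪ B).card : ℤ) ^ 2 + ((A ∩ B).card : ℤ) ^ 2 := by
          have e1 : ((A ∪ B).card : ℤ) + ((A ∩ B).card : ℤ) = A.card + B.card := by
            exact_mod_cast hsum
          have e2 : (A.card : ℤ) < (A ∪ B).card := by exact_mod_cast hcu
          have e3 : (B.card : ℤ) < (A ∪ B).card := by exact_mod_cast hcb
          nlinarith
        exact_mod_cast h1'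
      have hcard' : Multiset.card 𝒜' = Multiset.card 𝒜 := by
        rw [h1, h𝒜']; simp
      have hsq : (𝒜.map fun A => A.card ^ 2).sum + 1 ≤ (𝒜'.map fun A => A.card ^ 2).sum := by
        rw [h1, h𝒜']
        simp only [Multiset.map_cons, Multiset.sum_cons]
        omega
      have hbound : (𝒜'.map fun A => A.card ^ 2).sum ≤ Multiset.card 𝒜' * E.card ^ 2 :=
        sum_sq_le E 𝒜' hsub'
      set m' := Multiset.card 𝒜' * E.card ^ 2 - (𝒜'.map fun A => A.card ^ 2).sum with hm'
      have hlt : m' < m := by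
        have hb2 : (𝒜'.map fun A => A.card ^ 2).sum ≤ Multiset.card 𝒜 * E.card ^ 2 :=
          hcard' ▸ hbound
        rw [hm', hcard', ← hm]
        omega
      have := IH m' hlt 𝒜' rfl hsub' hcov'
      refine this.trans ?_
      rw [h1, h𝒜']
      simp only [Multiset.map_cons, Multiset.sum_cons]
      have := hssub A B
      linarith


private lemma le_card_mul {G : Type*} [Group G] [DecidableEq G]
    (a : Finset G → ℝ) (h0 : a ∅ = 0) (hnn : ∀ F, 0 ≤ a F)
    (hinv : ∀ (F : Finset G) (g : G), a (F.image (fun f => f * g)) = a F)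
    (hssub : ∀ F₁ F₂ : Finset G, a (F₁ ∪ F₂) ≤ a F₁ + a F₂ - a (F₁ ∩ F₂))
    (S : Finset G) : a S ≤ S.card * a {1} := by
  induction S using Finset.induction_on with
  | empty => simp [h0]
  | @insert x S hx ih =>
    have h1 : a {x} = a {1} := by simpa using hinv {1} x
    have h2 := hssub {x} S
    rw [Finset.singleton_inter_of_notMem hx, h0, ← Finset.insert_eq] at h2
    rw [Finset.card_insert_of_notMem hx]
    push_cast
    linarith

private lemma key_est {G : Type*} [Group G] [DecidableEq G]
    (a : Finset G → ℝ) (h0 : a ∅ = 0) (hnn : ∀ F, 0 ≤ a F)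
    (hinv : ∀ (F : Finset G) (g : G), a (F.image (fun f => f * g)) = a F)
    (hssub : ∀ F₁ F₂ : Finset G, a (F₁ ∪ F₂) ≤ a F₁ + a F₂ - a (F₁ ∩ F₂))
    (F E : Finset G) (hF : F.Nonempty) :
    (F.card : ℝ) * a E ≤ (E.card : ℝ) * a F
      + (F.card : ℝ) ^ 3 * a {1} *
        (((F * F⁻¹ * E) \ E ∪ E \ (F * F⁻¹ * E)).card : ℝ) := by
  classical
  set M := a {1} with hM
  have hM0 : 0 ≤ M := hnn _
  set K : Finset G := F * F⁻¹ with hK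
  set D : ℕ := ((K * E) \ E ∪ E \ (K * E)).card with hD
  set I : Finset G := F⁻¹ * E with hI
  set T : G → Finset G := fun g => F.image (fun f => f * g) with hT
  have hTsub : ∀ g, ∀ y ∈ T g, ∃ f ∈ F, f * g = y := by
    intro g y hy
    rw [hT, Finset.mem_image] at hy
    obtain ⟨f, hf, rfl⟩ := hy
    exact ⟨f, hf, rfl⟩
  have hmemT : ∀ g, ∀ f ∈ F, f * g ∈ T g := by
    intro g f hf
    rw [hT]
    exact Finset.mem_image.mpr ⟨f, hf, rfl⟩
  have hmemI : ∀ g ∈ I, ∃ f ∈ F, f * g ∈ E := by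
    intro g hg
    rw [hI, Finset.mem_mul] at hg
    obtain ⟨y, hy, z, hz, hyz⟩ := hg
    rw [Finset.mem_inv] at hy
    obtain ⟨f, hf, rfl⟩ := hy
    exact ⟨f, hf, by rw [← hyz]; simpa using hz⟩
  have hImem : ∀ (f : G), f ∈ F → ∀ e ∈ E, f⁻¹ * e ∈ I := by
    intro f hf e he
    rw [hI, Finset.mem_mul]
    exact ⟨f⁻¹, Finset.mem_inv.mpr ⟨f, hf, rfl⟩, e, he, rfl⟩
  -- Shearer step
  have hcov : ∀ x ∈ E,
      ((I.val.map fun g => E ∩ T g).map fun A => if x ∈ A then (1 : ℕ) else 0).sum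
        = F.card := by
    intro x hx
    rw [Multiset.map_map]
    have hsum : ((I.val.map fun g => if x ∈ E ∩ T g then (1 : ℕ) else 0)).sum
        = (I.filter fun g => x ∈ E ∩ T g).card := by
      rw [Finset.card_filter]
      rfl
    have hfilter : I.filter (fun g => x ∈ E ∩ T g) = F.image (fun f => f⁻¹ * x) := by
      ext g
      simp only [Finset.mem_filter, Finset.mem_image, Finset.mem_inter]
      constructor
      · rintro ⟨hgI, -, hxT⟩
        obtain ⟨f, hf, hfg⟩ := hTsub g x hxT
        exact ⟨f, hf, by rw [← hfg]; group⟩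
      · rintro ⟨f, hf, rfl⟩
        refine ⟨hImem f hf x hx, hx, ?_⟩
        have := hmemT (f⁻¹ * x) f hf
        rwa [show f * (f⁻¹ * x) = x by group] at this
    have hinj : Function.Injective (fun f : G => f⁻¹ * x) := by
      intro u v h
      simp only at h
      have := mul_right_cancel h
      exact inv_injective this
    calc ((I.val.map fun g => if x ∈ E ∩ T g then (1 : ℕ) else 0)).sum
        = (I.filter fun g => x ∈ E ∩ T g).card := hsum
      _ = (F.image fun f => f⁻¹ * x).card := by rw [hfilter]
      _ = F.card := Finset.card_image_of_injective _ hinj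
  have hsub : ∀ A ∈ (I.val.map fun g => E ∩ T g), A ⊆ E := by
    intro A hA
    rw [Multiset.mem_map] at hA
    obtain ⟨g, -, rfl⟩ := hA
    exact Finset.inter_subset_left
  have hshear := shearer a h0 hssub E F.card (I.val.map fun g => E ∩ T g) hsub hcov
  have hsum_eq : ((I.val.map fun g => E ∩ T g).map a).sum = ∑ g ∈ I, a (E ∩ T g) := by
    rw [Multiset.map_map]
    rfl
  rw [hsum_eq] at hshear
  -- split into good and bad
  set G0 : Finset G := I.filter (fun g => T g ⊆ E) with hG0
  set Bad : Finset G := I.filter (fun g => ¬ T g ⊆ E) with hBad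
  have hsplit : ∑ g ∈ I, a (E ∩ T g) = ∑ g ∈ G0, a (E ∩ T g) + ∑ g ∈ Bad, a (E ∩ T g) :=
    (Finset.sum_filter_add_sum_filter_not I _ _).symm
  -- good part
  have hgood : ∑ g ∈ G0, a (E ∩ T g) = (G0.card : ℝ) * a F := by
    rw [Finset.sum_congr rfl (fun g hg => ?_), Finset.sum_const, nsmul_eq_mul]
    rw [hG0, Finset.mem_filter] at hg
    rw [Finset.inter_eq_right.mpr hg.2]
    exact hinv F g
  obtain ⟨f₀, hf₀⟩ := hF
  have hG0card : G0.card ≤ E.card := by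
    apply Finset.card_le_card_of_injOn (fun g => f₀ * g)
    · intro g hg
      rw [hG0, Finset.mem_coe, Finset.mem_filter] at hg
      exact hg.2 (hmemT g f₀ hf₀)
    · intro u _ v _ h
      exact mul_left_cancel h
  -- bad part
  have hbadterm : ∀ g ∈ Bad, a (E ∩ T g) ≤ (F.card : ℝ) * M := by
    intro g _
    have h1 := le_card_mul a h0 hnn hinv hssub (E ∩ T g)
    have h2 : (E ∩ T g).card ≤ F.card :=
      le_trans (Finset.card_le_card Finset.inter_subset_right) (Finset.card_image_le)
    calc a (E ∩ T g) ≤ ((E ∩ T g).card : ℝ) * M := h1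
      _ ≤ (F.card : ℝ) * M := by
          apply mul_le_mul_of_nonneg_right _ hM0
          exact_mod_cast h2
  have hbadsum : ∑ g ∈ Bad, a (E ∩ T g) ≤ (Bad.card : ℝ) * ((F.card : ℝ) * M) := by
    have := Finset.sum_le_card_nsmul Bad _ _ hbadterm
    rwa [nsmul_eq_mul] at this
  -- bad count
  have hbadcard : Bad.card ≤ F.card ^ 2 * D := by
    have hsubB : Bad ⊆ (F ×ˢ F).biUnion
        (fun p => (E.image fun e => p.1⁻¹ * e) \ (E.image fun e => p.2⁻¹ * e)) := by
      intro g hg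
      rw [hBad, Finset.mem_filter] at hg
      obtain ⟨hgI, hgB⟩ := hg
      obtain ⟨f, hf, hfE⟩ := hmemI g hgI
      rw [Finset.not_subset] at hgB
      obtain ⟨t, htT, htE⟩ := hgB
      obtain ⟨f', hf', rfl⟩ := hTsub g t htT
      rw [Finset.mem_biUnion]
      refine ⟨(f, f'), Finset.mem_product.mpr ⟨hf, hf'⟩, ?_⟩
      rw [Finset.mem_sdiff]
      constructor
      · exact Finset.mem_image.mpr ⟨f * g, hfE, by group⟩
      · intro hmem
        obtain ⟨e, he, heg⟩ := Finset.mem_image.mp hmem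
        apply htE
        rw [← heg, show f' * (f'⁻¹ * e) = e by group]
        exact he
    have hcardS : ∀ p ∈ F ×ˢ F,
        ((E.image fun e => p.1⁻¹ * e) \ (E.image fun e => p.2⁻¹ * e)).card ≤ D := by
      rintro ⟨f, f'⟩ hp
      rw [Finset.mem_product] at hp
      set S := (E.image fun e => f⁻¹ * e) \ (E.image fun e => f'⁻¹ * e) with hS
      have himg : S.image (fun g => f' * g) ⊆ (K * E) \ E := by
        intro h hh
        obtain ⟨g, hgS, rfl⟩ := Finset.mem_image.mp hh
        rw [hS, Finset.mem_sdiff] at hgS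
        obtain ⟨hg1, hg2⟩ := hgS
        obtain ⟨e, he, rfl⟩ := Finset.mem_image.mp hg1
        rw [Finset.mem_sdiff]
        constructor
        · rw [Finset.mem_mul]
          refine ⟨f' * f⁻¹, ?_, e, he, by group⟩
          rw [hK, Finset.mem_mul]
          exact ⟨f', hp.2, f⁻¹, Finset.mem_inv.mpr ⟨f, hp.1, rfl⟩, rfl⟩
        · intro hcon
          apply hg2
          exact Finset.mem_image.mpr ⟨f' * (f⁻¹ * e), hcon, by group⟩
      calc S.card = (S.image fun g => f' * g).card :=
            (Finset.card_image_of_injective _ (mul_right_injective f')).symm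
        _ ≤ ((K * E) \ E).card := Finset.card_le_card himg
        _ ≤ D := by
            rw [hD]
            exact Finset.card_le_card Finset.subset_union_left
    calc Bad.card ≤ ((F ×ˢ F).biUnion _).card := Finset.card_le_card hsubB
      _ ≤ ∑ p ∈ F ×ˢ F,
            ((E.image fun e => p.1⁻¹ * e) \ (E.image fun e => p.2⁻¹ * e)).card :=
          Finset.card_biUnion_le
      _ ≤ (F ×ˢ F).card * D := by
          have := Finset.sum_le_card_nsmul (F ×ˢ F) _ D hcardS
          rwa [smul_eq_mul] at this
      _ = F.card ^ 2 * D := by rw [Finset.card_product]; ring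
  -- combine
  have hG0R : (G0.card : ℝ) * a F ≤ (E.card : ℝ) * a F :=
    mul_le_mul_of_nonneg_right (by exact_mod_cast hG0card) (hnn F)
  have hBadR : (Bad.card : ℝ) * ((F.card : ℝ) * M)
      ≤ ((F.card : ℝ) ^ 2 * D) * ((F.card : ℝ) * M) := by
    apply mul_le_mul_of_nonneg_right _ (by positivity)
    calc (Bad.card : ℝ) ≤ ((F.card ^ 2 * D : ℕ) : ℝ) := by exact_mod_cast hbadcard
      _ = (F.card : ℝ) ^ 2 * D := by push_cast; ring
  calc (F.card : ℝ) * a E ≤ ∑ g ∈ I, a (E ∩ T g) := hshear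
    _ = ∑ g ∈ G0, a (E ∩ T g) + ∑ g ∈ Bad, a (E ∩ T g) := hsplit
    _ ≤ (E.card : ℝ) * a F + ((F.card : ℝ) ^ 2 * D) * ((F.card : ℝ) * M) := by
        rw [hgood]
        exact add_le_add hG0R (hbadsum.trans hBadR)
    _ = (E.card : ℝ) * a F + (F.card : ℝ) ^ 3 * M * D := by ring

theorem stmt17 {G : Type*} [Group G] [DecidableEq G] [Countable G]
    (a : Finset G → ℝ) (h0 : a ∅ = 0) (hnn : ∀ F, 0 ≤ a F)
    (hinv : ∀ (F : Finset G) (g : G), a (F.image (fun f => f * g)) = a F)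
    (hssub : ∀ F₁ F₂ : Finset G, a (F₁ ∪ F₂) ≤ a F₁ + a F₂ - a (F₁ ∩ F₂))
    (Fo : ℕ → Finset G) (hFo : FolnerSeq Fo) :
    Tendsto (fun n => a (Fo n) / (Fo n).card) atTop
      (𝓝 (⨅ F : {F : Finset G // F.Nonempty}, a F.1 / F.1.card)) := by
  classical
  have : Nonempty {F : Finset G // F.Nonempty} := ⟨⟨{1}, Finset.singleton_nonempty 1⟩⟩
  set L : ℝ := ⨅ F : {F : Finset G // F.Nonempty}, a F.1 / F.1.card with hLdef
  have hbdd : BddBelow (Set.range fun F : {F : Finset G // F.Nonempty} => a F.1 / F.1.card) := by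
    refine ⟨0, ?_⟩
    rintro x ⟨F, rfl⟩
    have : (0:ℝ) ≤ (F.1.card : ℝ) := by positivity
    exact div_nonneg (hnn F.1) this
  have hlower : ∀ n, L ≤ a (Fo n) / (Fo n).card := fun n =>
    ciInf_le hbdd ⟨Fo n, hFo.1 n⟩
  rw [Metric.tendsto_atTop]
  intro ε hε
  have hLlt : L < L + ε / 2 := by linarith
  obtain ⟨⟨F, hF⟩, hFlt⟩ := exists_lt_of_ciInf_lt (hLdef ▸ hLlt)
  rw [← hLdef] at hFlt
  have hFlt' : a F / (F.card : ℝ) < L + ε / 2 := hFlt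
  set M := a {1} with hM
  have hM0 : 0 ≤ M := hnn _
  set C : ℝ := (F.card : ℝ) ^ 2 * M + 1 with hC
  have hC0 : 0 < C := by positivity
  set δ : ℝ := (ε / 2) / C with hδ
  have hδ0 : 0 < δ := by positivity
  obtain ⟨N, hN⟩ := (eventually_atTop.mp (hFo.2 (F * F⁻¹) δ hδ0))
  refine ⟨N, fun n hn => ?_⟩
  set E := Fo n with hE
  have hEne : E.Nonempty := hFo.1 n
  have hEc : (0:ℝ) < E.card := by exact_mod_cast Finset.card_pos.mpr hEne
  have hFc : (0:ℝ) < F.card := by exact_mod_cast Finset.card_pos.mpr hF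
  have hKI : KInvariant (F * F⁻¹) E δ := hN n hn
  rw [KInvariant] at hKI
  set D : ℝ := (((F * F⁻¹ * E) \ E ∪ E \ (F * F⁻¹ * E)).card : ℝ) with hDdef
  have hD0 : 0 ≤ D := by positivity
  have hkey := key_est a h0 hnn hinv hssub F E hF
  -- divide
  have hFne : (F.card : ℝ) ≠ 0 := ne_of_gt hFc
  have hEne' : (E.card : ℝ) ≠ 0 := ne_of_gt hEc
  have hdiv : a E / E.card ≤ a F / F.card + (F.card : ℝ) ^ 2 * M * (D / E.card) := by
    rw [div_le_iff₀ hEc, ← mul_le_mul_iff_right₀ hFc]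
    calc (F.card : ℝ) * a E
        ≤ (E.card : ℝ) * a F + (F.card : ℝ) ^ 3 * M * D := hkey
      _ = (F.card : ℝ) * ((a F / F.card + (F.card : ℝ) ^ 2 * M * (D / E.card)) * E.card) := by
          field_simp
  have hsmall : (F.card : ℝ) ^ 2 * M * (D / E.card) ≤ ε / 2 := by
    have h1 : D / E.card < δ := hKI
    have h2 : (F.card : ℝ) ^ 2 * M * (D / E.card) ≤ (F.card : ℝ) ^ 2 * M * δ :=
      mul_le_mul_of_nonneg_left (le_of_lt h1) (by positivity)
    have h3 : (F.card : ℝ) ^ 2 * M * δ ≤ C * δ := by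
      apply mul_le_mul_of_nonneg_right _ (le_of_lt hδ0)
      rw [hC]; linarith
    have h4 : C * δ = ε / 2 := by
      rw [hδ]; field_simp
    linarith
  have hup : a E / E.card < L + ε := by
    calc a E / E.card ≤ a F / F.card + ε / 2 := by linarith
      _ < (L + ε / 2) + ε / 2 := by linarith
      _ = L + ε := by ring
  have hlo : L ≤ a E / E.card := hlower n
  rw [Real.dist_eq, abs_lt]
  constructor <;> linarith
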